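/- Let z ≥ 1 be a real number and k ≥ 1 an integer. Then for every positive integer n ≤ 2z^k, Λ(n) = Σ_{j=1}^{k} (−1)^{j−1} binom(k, j) Σ (log n₁) μ(n_{j+1}) ⋯ μ(n_{2j}), where the inner sum runs over all ordered 2j-tuples (n₁, …, n_{2j}) of positive integers with n₁ n₂ ⋯ n_{2j} = n and n_i ≤ z for every i with j+1 ≤ i ≤ 2j. -/

import Mathlib

open scoped Classical
open ArithmeticFunction Finset
open scoped ArithmeticFunction.zeta ArithmeticFunction.Moebius

theorem HB.prod_apply {m : ℕ} (g : Fin m → ArithmeticFunction ℝ) (n : ℕ) (hn : n ≠ 0) :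
    (∏ i, g i) n =
      ∑ f ∈ (Fintype.piFinset fun _ : Fin m => n.divisors).filter
          (fun f => (∏ i, f i) = n), ∏ i, g i (f i) := by
  induction m generalizing n with
  | zero =>
    rw [Fintype.piFinset_of_isEmpty]
    simp only [Finset.univ_eq_empty, Finset.prod_empty, ArithmeticFunction.one_apply,
      Finset.sum_filter, Finset.sum_const]
    rcases eq_or_ne n 1 with rfl | h1
    · simp
    · simp [h1, Ne.symm h1]
  | succ m ih =>
    rw [Fin.prod_univ_succ, ArithmeticFunction.mul_apply]
    have key : ∀ p ∈ n.divisorsAntidiagonal,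
        g 0 p.1 * (∏ i : Fin m, g i.succ) p.2
        = ∑ f' ∈ (Fintype.piFinset fun _ : Fin m => p.2.divisors).filter
            (fun f => (∏ i, f i) = p.2), g 0 p.1 * ∏ i, g i.succ (f' i) := by
      intro p hp
      have hd := Nat.mem_divisorsAntidiagonal.mp hp
      have h2 : p.2 ≠ 0 := fun h => hd.2 (by rw [← hd.1, h, mul_zero])
      rw [ih (fun i => g i.succ) p.2 h2, Finset.mul_sum]
    rw [Finset.sum_congr rfl key, Finset.sum_sigma']
    refine Finset.sum_nbij' (i := fun x => Fin.cons x.1.1 x.2)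
      (j := fun f => ⟨(f 0, ∏ i : Fin m, f i.succ), Fin.tail f⟩) ?_ ?_ ?_ ?_ ?_
    · rintro ⟨⟨a, b⟩, f'⟩ hx
      rw [Finset.mem_sigma] at hx
      obtain ⟨hab, hf'⟩ := hx
      rw [Nat.mem_divisorsAntidiagonal] at hab
      rw [Finset.mem_filter, Fintype.mem_piFinset] at hf' ⊢
      obtain ⟨hmem, hprod⟩ := hf'
      constructor
      · intro i
        refine Fin.cases ?_ ?_ i
        · simp only [Fin.cons_zero, Nat.mem_divisors]
          exact ⟨⟨b, hab.1.symm⟩, hab.2⟩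
        · intro j
          simp only [Fin.cons_succ, Nat.mem_divisors]
          have := hmem j
          rw [Nat.mem_divisors] at this
          exact ⟨this.1.trans ⟨a, by rw [← hab.1]; ring⟩, hab.2⟩
      · rw [Fin.prod_univ_succ]
        simp only [Fin.cons_zero, Fin.cons_succ]
        rw [hprod, hab.1]
    · intro f hf
      rw [Finset.mem_filter, Fintype.mem_piFinset] at hf
      obtain ⟨hmem, hprod⟩ := hf
      rw [Finset.mem_sigma]
      constructor
      · rw [Nat.mem_divisorsAntidiagonal]
        exact ⟨by rw [← hprod, Fin.prod_univ_succ], hn⟩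
      · rw [Finset.mem_filter, Fintype.mem_piFinset]
        have hb : (∏ i : Fin m, f i.succ) ≠ 0 := by
          intro h
          apply hn
          rw [← hprod, Fin.prod_univ_succ, h, mul_zero]
        refine ⟨fun i => ?_, rfl⟩
        rw [Nat.mem_divisors]
        exact ⟨Finset.dvd_prod_of_mem _ (Finset.mem_univ i), hb⟩
    · rintro ⟨⟨a, b⟩, f'⟩ hx
      rw [Finset.mem_sigma] at hx
      obtain ⟨hab, hf'⟩ := hx
      rw [Finset.mem_filter] at hf'
      have : (∏ i : Fin m, Fin.cons (α := fun _ => ℕ) a f' i.succ) = b := by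
        simp only [Fin.cons_succ]; exact hf'.2
      simp only [Fin.cons_zero, Fin.tail_cons, this]
    · intro f hf
      exact Fin.cons_self_tail f
    · rintro ⟨⟨a, b⟩, f'⟩ hx
      rw [Fin.prod_univ_succ]
      simp only [Fin.cons_zero, Fin.cons_succ]

noncomputable def HB.muz (z : ℝ) : ArithmeticFunction ℝ :=
  ⟨fun m => if (m : ℝ) ≤ z then ((moebius m : ℤ) : ℝ) else 0, by simp⟩

theorem HB.muz_apply (z : ℝ) (m : ℕ) :
    HB.muz z m = if (m : ℝ) ≤ z then ((moebius m : ℤ) : ℝ) else 0 := rfl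

theorem HB.sub_apply (f g : ArithmeticFunction ℝ) (m : ℕ) : (f - g) m = f m - g m := rfl

theorem HB.h_eq_zero (z : ℝ) (m : ℕ) (hm : (m : ℝ) ≤ z) :
    (1 - (ζ : ArithmeticFunction ℝ) * HB.muz z) m = 0 := by
  have key : ((ζ : ArithmeticFunction ℝ) * HB.muz z) m
      = ((ζ : ArithmeticFunction ℝ) * ((μ : ArithmeticFunction ℤ) : ArithmeticFunction ℝ)) m := by
    rw [ArithmeticFunction.mul_apply, ArithmeticFunction.mul_apply]
    refine Finset.sum_congr rfl fun p hp => ?_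
    have hd := Nat.mem_divisorsAntidiagonal.mp hp
    have hle : (p.2 : ℝ) ≤ z := le_trans
      (by exact_mod_cast Nat.le_of_dvd (Nat.pos_of_ne_zero hd.2) ⟨p.1, by rw [← hd.1]; ring⟩) hm
    rw [HB.muz_apply, if_pos hle, ArithmeticFunction.intCoe_apply]
  rw [HB.sub_apply, key, ArithmeticFunction.coe_zeta_mul_coe_moebius, sub_self]

theorem HB.hpow_eq_zero (z : ℝ) (hz : 1 ≤ z) (k : ℕ) (hk : 1 ≤ k) (b : ℕ)
    (hb : (b : ℝ) ≤ z ^ k) :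
    ((1 - (ζ : ArithmeticFunction ℝ) * HB.muz z) ^ k) b = 0 := by
  induction k, hk using Nat.le_induction generalizing b with
  | base => rw [pow_one]; exact HB.h_eq_zero z b (by simpa using hb)
  | succ k hk ih =>
    rw [pow_succ, ArithmeticFunction.mul_apply]
    refine Finset.sum_eq_zero fun p hp => ?_
    have hd := Nat.mem_divisorsAntidiagonal.mp hp
    by_cases hc : (p.1 : ℝ) ≤ z ^ k
    · rw [ih p.1 hc, zero_mul]
    · push_neg at hc
      rcases Nat.eq_zero_or_pos p.2 with h0 | hpos
      · rw [h0, ArithmeticFunction.map_zero, mul_zero]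
      · have hzk : (0 : ℝ) < z ^ k := pow_pos (lt_of_lt_of_le one_pos hz) k
        have h2 : (p.2 : ℝ) * p.1 = (b : ℝ) := by
          rw [← hd.1]; push_cast; ring
        have hp2 : (0 : ℝ) < (p.2 : ℝ) := by exact_mod_cast hpos
        have hble : (b : ℝ) ≤ z ^ k * z := by rw [← pow_succ]; exact hb
        have hlt : (p.2 : ℝ) < z := by nlinarith
        rw [HB.h_eq_zero z p.2 hlt.le, mul_zero]

theorem HB.sum_apply' {ι : Type*} (s : Finset ι) (F : ι → ArithmeticFunction ℝ) (m : ℕ) :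
    (∑ j ∈ s, F j) m = ∑ j ∈ s, F j m := by
  classical
  induction s using Finset.induction with
  | empty => simp
  | insert _ _ h ih =>
    rw [Finset.sum_insert h, Finset.sum_insert h, ArithmeticFunction.add_apply, ih]

theorem HB.intCast_mul_apply (c : ℤ) (F : ArithmeticFunction ℝ) (m : ℕ) :
    (((c : ℤ) : ArithmeticFunction ℝ) * F) m = (c : ℝ) * F m := by
  induction c using Int.induction_on with
  | zero => simp
  | succ i ih =>
    have h1 : (((i : ℤ) + 1 : ℤ) : ArithmeticFunction ℝ) = ((i : ℤ) : ArithmeticFunction ℝ) + 1 := by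
      push_cast; ring
    rw [h1, add_mul, one_mul, ArithmeticFunction.add_apply, ih]
    push_cast; ring
  | pred i ih =>
    have h1 : ((-(i : ℤ) - 1 : ℤ) : ArithmeticFunction ℝ) = ((-(i : ℤ) : ℤ) : ArithmeticFunction ℝ) - 1 := by
      push_cast; ring
    rw [h1, sub_mul, one_mul, HB.sub_apply, ih]
    push_cast; ring

theorem HB.expand (g : ArithmeticFunction ℝ) (k : ℕ) :
    1 - (1 - g) ^ k = ∑ j ∈ Finset.range k,
      ((((-1) ^ j * (k.choose (j + 1)) : ℤ) : ArithmeticFunction ℝ)) * g ^ (j + 1) := by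
  have hb : (1 - g) ^ k = (-g + 1) ^ k := by ring
  rw [hb, add_pow, Finset.sum_range_succ']
  simp only [pow_zero, one_mul, Nat.choose_zero_right, Nat.cast_one, mul_one, Nat.sub_zero,
    one_pow]
  rw [add_comm, ← sub_sub, sub_self, zero_sub, ← Finset.sum_neg_distrib]
  refine Finset.sum_congr rfl fun j hj => ?_
  rw [neg_pow]
  push_cast
  ring

noncomputable def HB.G (z : ℝ) (j : ℕ) : ℕ → ArithmeticFunction ℝ := fun i =>
  if i = 0 then ArithmeticFunction.log
  else if i ≤ j then (ζ : ArithmeticFunction ℝ) else HB.muz z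

theorem HB.prod_form (z : ℝ) (j : ℕ) :
    ArithmeticFunction.vonMangoldt * ((ζ : ArithmeticFunction ℝ) * HB.muz z) ^ (j + 1)
      = ∏ i : Fin (2 * (j + 1)), HB.G z j (i : ℕ) := by
  have h1 : ArithmeticFunction.vonMangoldt * ((ζ : ArithmeticFunction ℝ) * HB.muz z) ^ (j + 1)
      = ArithmeticFunction.log * (ζ : ArithmeticFunction ℝ) ^ j * HB.muz z ^ (j + 1) := by
    have h2 : ArithmeticFunction.vonMangoldt * ((ζ : ArithmeticFunction ℝ) * HB.muz z) ^ (j + 1)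
        = (ArithmeticFunction.vonMangoldt * (ζ : ArithmeticFunction ℝ)) *
          ((ζ : ArithmeticFunction ℝ) ^ j * HB.muz z ^ (j + 1)) := by ring
    rw [h2, ArithmeticFunction.vonMangoldt_mul_zeta, ← mul_assoc]
  rw [h1, Fin.prod_univ_eq_prod_range (fun i => HB.G z j i) (2 * (j + 1)), two_mul,
    Finset.prod_range_add]
  have e1 : ∀ i ∈ Finset.range j, HB.G z j (i + 1) = (ζ : ArithmeticFunction ℝ) := by
    intro i hi
    rw [Finset.mem_range] at hi
    unfold HB.G
    rw [if_neg (Nat.succ_ne_zero i), if_pos (by omega)]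
  have e2 : ∀ i ∈ Finset.range (j + 1), HB.G z j ((j + 1) + i) = HB.muz z := by
    intro i hi
    unfold HB.G
    rw [if_neg (by omega), if_neg (by omega)]
  have hblock1 : (∏ i ∈ Finset.range (j + 1), HB.G z j i)
      = (ζ : ArithmeticFunction ℝ) ^ j * ArithmeticFunction.log := by
    rw [Finset.prod_range_succ', Finset.prod_congr rfl e1, Finset.prod_const, Finset.card_range]
    unfold HB.G
    rw [if_pos rfl]
  have hblock2 : (∏ i ∈ Finset.range (j + 1), HB.G z j ((j + 1) + i)) = HB.muz z ^ (j + 1) := by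
    rw [Finset.prod_congr rfl e2, Finset.prod_const, Finset.card_range]
  rw [hblock1, hblock2]
  ring

theorem HB.inner (z : ℝ) (hz : 1 ≤ z) (j n : ℕ) (hn : 0 < n) :
    (ArithmeticFunction.vonMangoldt * ((ζ : ArithmeticFunction ℝ) * HB.muz z) ^ (j + 1)) n =
      ∑ f ∈ (Fintype.piFinset fun _ : Fin (2 * (j + 1)) => Finset.Icc 1 n).filter
          (fun f => (∏ i, f i) = n ∧
            ∀ i : Fin (2 * (j + 1)), j + 1 ≤ (i : ℕ) → (f i : ℝ) ≤ z),
        Real.log (f ⟨0, by omega⟩) *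
          ∏ i ∈ Finset.univ.filter (fun i : Fin (2 * (j + 1)) => j + 1 ≤ (i : ℕ)),
            ((ArithmeticFunction.moebius (f i) : ℤ) : ℝ) := by
  classical
  rw [HB.prod_form, HB.prod_apply (fun i : Fin (2 * (j + 1)) => HB.G z j (i : ℕ)) n hn.ne']
  have hset : (Fintype.piFinset fun _ : Fin (2 * (j + 1)) => n.divisors).filter
        (fun f => (∏ i, f i) = n)
      = (Fintype.piFinset fun _ : Fin (2 * (j + 1)) => Finset.Icc 1 n).filter
        (fun f => (∏ i, f i) = n) := by
    ext f
    simp only [Finset.mem_filter, Fintype.mem_piFinset, Nat.mem_divisors, Finset.mem_Icc]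
    constructor
    · rintro ⟨hmem, hprod⟩
      exact ⟨fun i => ⟨Nat.pos_of_dvd_of_pos (hmem i).1 hn,
        Nat.le_of_dvd hn (hmem i).1⟩, hprod⟩
    · rintro ⟨hmem, hprod⟩
      refine ⟨fun i => ⟨?_, hn.ne'⟩, hprod⟩
      rw [← hprod]
      exact Finset.dvd_prod_of_mem _ (Finset.mem_univ i)
  rw [hset]
  have hsplit : (Fintype.piFinset fun _ : Fin (2 * (j + 1)) => Finset.Icc 1 n).filter
        (fun f => (∏ i, f i) = n ∧
          ∀ i : Fin (2 * (j + 1)), j + 1 ≤ (i : ℕ) → (f i : ℝ) ≤ z)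
      = ((Fintype.piFinset fun _ : Fin (2 * (j + 1)) => Finset.Icc 1 n).filter
          (fun f => (∏ i, f i) = n)).filter
        (fun f => ∀ i : Fin (2 * (j + 1)), j + 1 ≤ (i : ℕ) → (f i : ℝ) ≤ z) := by
    rw [Finset.filter_filter]
  rw [hsplit]
  conv_rhs => rw [Finset.sum_filter]
  refine Finset.sum_congr rfl fun f hf => ?_
  rw [Finset.mem_filter, Fintype.mem_piFinset] at hf
  have hf1 : ∀ i, 1 ≤ f i := fun i => (Finset.mem_Icc.mp (hf.1 i)).1
  rw [← Finset.prod_filter_mul_prod_filter_not Finset.univ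
    (fun i : Fin (2 * (j + 1)) => j + 1 ≤ (i : ℕ))]
  have hfirst : (∏ i ∈ Finset.univ.filter (fun i : Fin (2 * (j + 1)) => j + 1 ≤ (i : ℕ)),
        HB.G z j (i : ℕ) (f i))
      = if (∀ i : Fin (2 * (j + 1)), j + 1 ≤ (i : ℕ) → (f i : ℝ) ≤ z) then
          ∏ i ∈ Finset.univ.filter (fun i : Fin (2 * (j + 1)) => j + 1 ≤ (i : ℕ)),
            ((ArithmeticFunction.moebius (f i) : ℤ) : ℝ)
        else 0 := by
    have e : ∀ i ∈ Finset.univ.filter (fun i : Fin (2 * (j + 1)) => j + 1 ≤ (i : ℕ)),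
        HB.G z j (i : ℕ) (f i)
          = if (f i : ℝ) ≤ z then ((ArithmeticFunction.moebius (f i) : ℤ) : ℝ) else 0 := by
      intro i hi
      rw [Finset.mem_filter] at hi
      unfold HB.G
      rw [if_neg (by omega), if_neg (by omega)]
      rfl
    rw [Finset.prod_congr rfl e, Finset.prod_ite_zero]
    simp only [Finset.mem_filter, Finset.mem_univ, true_and]
  have hsecond : (∏ i ∈ Finset.univ.filter (fun i : Fin (2 * (j + 1)) => ¬ j + 1 ≤ (i : ℕ)),
        HB.G z j (i : ℕ) (f i)) = Real.log (f ⟨0, by omega⟩) := by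
    refine Finset.prod_eq_single_of_mem (⟨0, by omega⟩ : Fin (2 * (j + 1))) ?_ ?_
    · rw [Finset.mem_filter]
      exact ⟨Finset.mem_univ _, by simp⟩
    · intro b hb hbne
      rw [Finset.mem_filter] at hb
      have hb0 : (b : ℕ) ≠ 0 := by
        intro h
        exact hbne (Fin.ext h)
      unfold HB.G
      rw [if_neg hb0, if_pos (by omega), ArithmeticFunction.natCoe_apply,
        ArithmeticFunction.zeta_apply_ne (by have := hf1 b; omega), Nat.cast_one]
  rw [hfirst, hsecond]
  split_ifs with hc
  · ring
  · ring

theorem HB.lambda_hpow (z : ℝ) (hz : 1 ≤ z) (k : ℕ) (hk : 1 ≤ k) (n : ℕ) (hn : 0 < n)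
    (hnz : (n : ℝ) ≤ 2 * z ^ k) :
    (ArithmeticFunction.vonMangoldt *
      (1 - (ζ : ArithmeticFunction ℝ) * HB.muz z) ^ k) n = 0 := by
  rw [ArithmeticFunction.mul_apply]
  refine Finset.sum_eq_zero fun p hp => ?_
  have hd := Nat.mem_divisorsAntidiagonal.mp hp
  by_cases hb : (p.2 : ℝ) ≤ z ^ k
  · rw [HB.hpow_eq_zero z hz k hk p.2 hb, mul_zero]
  · push_neg at hb
    have h1 : p.1 = 1 := by
      by_contra h1
      have hp1 : 2 ≤ p.1 := by
        rcases Nat.lt_or_ge p.1 2 with h | h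
        · interval_cases h' : p.1 <;> simp_all
        · exact h
      have : (2 : ℝ) * z ^ k < (p.1 : ℝ) * p.2 := by
        have h2 : (2 : ℝ) ≤ (p.1 : ℝ) := by exact_mod_cast hp1
        have hzk : (0 : ℝ) < z ^ k := pow_pos (lt_of_lt_of_le one_pos hz) k
        nlinarith
      rw [show ((p.1 : ℝ) * p.2) = (n : ℝ) by exact_mod_cast congrArg Nat.cast hd.1] at this
      linarith
    rw [h1, ArithmeticFunction.vonMangoldt_apply_one, zero_mul]

theorem heath_brown_identity (z : ℝ) (hz : 1 ≤ z) (k : ℕ) (hk : 1 ≤ k)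
    (n : ℕ) (hn : 0 < n) (hnz : (n : ℝ) ≤ 2 * z ^ k) :
    (ArithmeticFunction.vonMangoldt n : ℝ) =
      ∑ j ∈ Finset.range k, (-1 : ℝ) ^ j * (k.choose (j + 1) : ℝ) *
        ∑ f ∈ (Fintype.piFinset fun _ : Fin (2 * (j + 1)) => Finset.Icc 1 n).filter
            (fun f => (∏ i, f i) = n ∧
              ∀ i : Fin (2 * (j + 1)), j + 1 ≤ (i : ℕ) → (f i : ℝ) ≤ z),
          Real.log (f ⟨0, by omega⟩) *
            ∏ i ∈ Finset.univ.filter (fun i : Fin (2 * (j + 1)) => j + 1 ≤ (i : ℕ)),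
              ((ArithmeticFunction.moebius (f i) : ℤ) : ℝ) := by
  classical
  have hdecomp : (ArithmeticFunction.vonMangoldt : ArithmeticFunction ℝ) =
      ArithmeticFunction.vonMangoldt *
        (1 - (1 - (ζ : ArithmeticFunction ℝ) * HB.muz z) ^ k) +
      ArithmeticFunction.vonMangoldt *
        (1 - (ζ : ArithmeticFunction ℝ) * HB.muz z) ^ k := by ring
  have step1 : (ArithmeticFunction.vonMangoldt n : ℝ) =
      (ArithmeticFunction.vonMangoldt *
        (1 - (1 - (ζ : ArithmeticFunction ℝ) * HB.muz z) ^ k)) n := by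
    conv_lhs => rw [hdecomp]
    rw [ArithmeticFunction.add_apply, HB.lambda_hpow z hz k hk n hn hnz, add_zero]
  rw [step1, HB.expand, Finset.mul_sum, HB.sum_apply']
  refine Finset.sum_congr rfl fun j hj => ?_
  rw [mul_left_comm, HB.intCast_mul_apply, HB.inner z hz j n hn]
  push_cast
  ring
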